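/- Fix ρ ∈ (-1, 1) and real numbers t₁ ≥ t₂. If β/2·(t₁ - t₂)(1 + ρ) ≥ max(φ(t₁), φ(t₂))·D for some D ≥ 0, then β/2·((t₁ - t₂)(1 + ρ)/√(1 - ρ²))·min(φ((t₁ - ρt₂)/√(1-ρ²)), φ((t₂ - ρt₁)/√(1-ρ²))) ≥ (1/(2π√(1-ρ²)))·exp(-(t₁² - 2ρt₁t₂ + t₂²)/(2(1-ρ²)))·D. -/

import Mathlib

noncomputable def phi (x : ℝ) : ℝ := (1 / Real.sqrt (2 * Real.pi)) * Real.exp (-x ^ 2 / 2)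

noncomputable def Phi (x : ℝ) : ℝ := ∫ t in Set.Iic x, phi t

noncomputable def phiRho (ρ x y : ℝ) : ℝ :=
  (1 / (2 * Real.pi * Real.sqrt (1 - ρ ^ 2))) *
    Real.exp (-(x ^ 2 - 2 * ρ * x * y + y ^ 2) / (2 * (1 - ρ ^ 2)))

noncomputable def PhiRho (ρ x y : ℝ) : ℝ :=
  ∫ s in Set.Iic x, ∫ t in Set.Iic y, phiRho ρ s t

noncomputable def PhiInv : ℝ → ℝ := Function.invFun Phi

lemma key_id (ρ : ℝ) (h1 : -1 < ρ) (h2 : ρ < 1) (x y : ℝ) :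
    phi x * phi ((y - ρ * x) / Real.sqrt (1 - ρ ^ 2)) / Real.sqrt (1 - ρ ^ 2)
      = (1 / (2 * Real.pi * Real.sqrt (1 - ρ ^ 2))) *
          Real.exp (-(y ^ 2 - 2 * ρ * y * x + x ^ 2) / (2 * (1 - ρ ^ 2))) := by
  have hs2 : (0:ℝ) < 1 - ρ ^ 2 := by nlinarith
  have hs : 0 < Real.sqrt (1 - ρ ^ 2) := Real.sqrt_pos.mpr hs2
  have hsq : Real.sqrt (1 - ρ ^ 2) ^ 2 = 1 - ρ ^ 2 := Real.sq_sqrt hs2.le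
  unfold phi
  have hu : ((y - ρ * x) / Real.sqrt (1 - ρ ^ 2)) ^ 2 = (y - ρ * x) ^ 2 / (1 - ρ ^ 2) := by
    rw [div_pow, hsq]
  have hx : -x ^ 2 / 2 + -((y - ρ * x) ^ 2 / (1 - ρ ^ 2)) / 2
      = -(y ^ 2 - 2 * ρ * y * x + x ^ 2) / (2 * (1 - ρ ^ 2)) := by
    field_simp; ring
  rw [hu, ← hx, Real.exp_add]
  field_simp
  rw [Real.sq_sqrt (by positivity)]

theorem stmt_13 (ρ t₁ t₂ β D : ℝ) (hρ : ρ ∈ Set.Ioo (-1 : ℝ) 1) (h12 : t₁ ≥ t₂)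
    (hβ : β > 0) (hD : D ≥ 0)
    (h : β / 2 * ((t₁ - t₂) * (1 + ρ)) ≥ max (phi t₁) (phi t₂) * D) :
    β / 2 * ((t₁ - t₂) * (1 + ρ) / Real.sqrt (1 - ρ ^ 2)) *
        min (phi ((t₁ - ρ * t₂) / Real.sqrt (1 - ρ ^ 2)))
            (phi ((t₂ - ρ * t₁) / Real.sqrt (1 - ρ ^ 2)))
      ≥ (1 / (2 * Real.pi * Real.sqrt (1 - ρ ^ 2))) *
          Real.exp (-(t₁ ^ 2 - 2 * ρ * t₁ * t₂ + t₂ ^ 2) / (2 * (1 - ρ ^ 2))) * D := by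
  obtain ⟨h1, h2⟩ := hρ
  have hs2 : (0:ℝ) < 1 - ρ ^ 2 := by nlinarith
  have hs : 0 < Real.sqrt (1 - ρ ^ 2) := Real.sqrt_pos.mpr hs2
  have hφ : ∀ z : ℝ, 0 < phi z := fun z => by
    unfold phi
    positivity
  set A := phi ((t₁ - ρ * t₂) / Real.sqrt (1 - ρ ^ 2)) with hA
  set B := phi ((t₂ - ρ * t₁) / Real.sqrt (1 - ρ ^ 2)) with hB
  rcases le_total A B with hAB | hAB
  · rw [min_eq_left hAB]
    have k := key_id ρ h1 h2 t₂ t₁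
    rw [← k]
    have h2' : β / 2 * ((t₁ - t₂) * (1 + ρ)) ≥ phi t₂ * D :=
      le_trans (mul_le_mul_of_nonneg_right (le_max_right _ _) hD) h
    have hApos := hφ ((t₁ - ρ * t₂) / Real.sqrt (1 - ρ ^ 2))
    calc phi t₂ * phi ((t₁ - ρ * t₂) / Real.sqrt (1 - ρ ^ 2)) / Real.sqrt (1 - ρ ^ 2) * D
        = (phi t₂ * D) * A / Real.sqrt (1 - ρ ^ 2) := by rw [hA]; ring
      _ ≤ (β / 2 * ((t₁ - t₂) * (1 + ρ))) * A / Real.sqrt (1 - ρ ^ 2) := by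
          gcongr
      _ = β / 2 * ((t₁ - t₂) * (1 + ρ) / Real.sqrt (1 - ρ ^ 2)) * A := by ring
  · rw [min_eq_right hAB]
    have k := key_id ρ h1 h2 t₁ t₂
    have k' : phi t₁ * B / Real.sqrt (1 - ρ ^ 2)
        = (1 / (2 * Real.pi * Real.sqrt (1 - ρ ^ 2))) *
            Real.exp (-(t₁ ^ 2 - 2 * ρ * t₁ * t₂ + t₂ ^ 2) / (2 * (1 - ρ ^ 2))) := by
      rw [hB, k]; ring_nf
    rw [← k']
    have h1' : β / 2 * ((t₁ - t₂) * (1 + ρ)) ≥ phi t₁ * D :=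
      le_trans (mul_le_mul_of_nonneg_right (le_max_left _ _) hD) h
    have hBpos := hφ ((t₂ - ρ * t₁) / Real.sqrt (1 - ρ ^ 2))
    calc phi t₁ * B / Real.sqrt (1 - ρ ^ 2) * D
        = (phi t₁ * D) * B / Real.sqrt (1 - ρ ^ 2) := by ring
      _ ≤ (β / 2 * ((t₁ - t₂) * (1 + ρ))) * B / Real.sqrt (1 - ρ ^ 2) := by
          gcongr
      _ = β / 2 * ((t₁ - t₂) * (1 + ρ) / Real.sqrt (1 - ρ ^ 2)) * B := by ring
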